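/- Define for 1 ≤ i ≤ j ≤ n the rational function F_{ij}(x,ξ;t) = t^{i-j}(1-t)² Σ_{i≤k≤j} ξ_k · x_k x_j Δ(x_i,…,t x_k,…,x_j) / ((t x_k - x_i)(t x_k - x_j) Δ(x_i,…,x_j)). Then F_{jj} = ξ_j, and for i < j the recurrence F_{ij} = ((1-t)/(t(1 - x_i x_j^{-1}))) · ( Σ_{i≤k<j} F_{ik} − Σ_{i<k≤j} x_k x_j^{-1} F_{kj} ) holds. -/

import Mathlib

open Finset

set_option maxHeartbeats 1600000

namespace Stmt8Aux

variable {K : Type*} [Field K]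

noncomputable def ww (t : K) (y : ℕ → K) (m l : ℕ) : K := (t * y m - y l) / (y m - y l)

noncomputable def WW (t : K) (y : ℕ → K) (a b m : ℕ) : K :=
  ∏ l ∈ (Finset.Icc a b).erase m, ww t y m l

noncomputable def cc (t : K) (y : ℕ → K) (a b m : ℕ) : K :=
  t ^ ((a : ℤ) - (b : ℤ)) * (1 - t) ^ 2 * (y m * y b * WW t y a b m) /
    ((t * y m - y a) * (t * y m - y b))

lemma WW_succ_right (t : K) (y : ℕ → K) (a b m : ℕ) (ham : a ≤ m) (hmb : m ≤ b) :
    WW t y a (b + 1) m = WW t y a b m * ww t y m (b + 1) := by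
  have hset : (Finset.Icc a (b + 1)).erase m = insert (b + 1) ((Finset.Icc a b).erase m) := by
    ext l; simp only [Finset.mem_erase, Finset.mem_Icc, Finset.mem_insert]; omega
  rw [WW, hset, Finset.prod_insert (by simp only [Finset.mem_erase, Finset.mem_Icc]; omega)]
  rw [WW]; ring

lemma WW_succ_left (t : K) (y : ℕ → K) (a b m : ℕ) (ham : a < m) (hmb : m ≤ b) :
    WW t y a b m = ww t y m a * WW t y (a + 1) b m := by
  have hset : (Finset.Icc a b).erase m = insert a ((Finset.Icc (a + 1) b).erase m) := by
    ext l; simp only [Finset.mem_erase, Finset.mem_Icc, Finset.mem_insert]; omega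
  rw [WW, hset, Finset.prod_insert (by simp only [Finset.mem_erase, Finset.mem_Icc]; omega)]
  rw [WW]

lemma sum_cc_left (t : K) (y : ℕ → K) (a m B : ℕ) (ht : t ≠ 0) (ham : a ≤ m)
    (hma : t * y m - y a ≠ 0) (hmm : t * y m - y m ≠ 0)
    (hstep : ∀ l, m < l → l ≤ B → y m - y l ≠ 0 ∧ t * y m - y l ≠ 0) :
    ∀ k, m ≤ k → k ≤ B → ∑ l ∈ Finset.Icc m k, cc t y a l m
      = (t - 1) * y m * t ^ ((a : ℤ) - (k : ℤ)) * WW t y a k m / (t * y m - y a) := by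
  intro k hk
  induction k, hk using Nat.le_induction with
  | base =>
    intro _
    rw [Finset.Icc_self, Finset.sum_singleton, cc]
    rw [div_eq_div_iff (mul_ne_zero hma hmm) hma]
    ring
  | succ k hmk ih =>
    intro hkB
    have hsum : Finset.Icc m (k + 1) = insert (k + 1) (Finset.Icc m k) := by
      ext l; simp only [Finset.mem_Icc, Finset.mem_insert]; omega
    rw [hsum, Finset.sum_insert (by simp only [Finset.mem_Icc]; omega), ih (by omega)]
    have hW := WW_succ_right t y a k m ham hmk
    have hz : t ^ ((a : ℤ) - ((k : ℤ) + 1)) = t ^ ((a : ℤ) - (k : ℤ)) * t⁻¹ := by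
      rw [← zpow_sub_one₀ ht]; ring_nf
    have h1 : y m - y (k + 1) ≠ 0 := (hstep (k+1) (by omega) hkB).1
    have h2 : t * y m - y (k + 1) ≠ 0 := (hstep (k+1) (by omega) hkB).2
    rw [cc, hW, ww]
    push_cast
    rw [hz]
    field_simp
    ring

end Stmt8Aux

namespace Stmt8Aux2
open Stmt8Aux
variable {K : Type*} [Field K]

lemma sum_cc_right (t : K) (y : ℕ → K) (b m A : ℕ) (ht : t ≠ 0) (hmb' : m ≤ b)
    (hb0 : y b ≠ 0) (hmb : t * y m - y b ≠ 0) (hmm : t * y m - y m ≠ 0)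
    (hstep : ∀ l, A ≤ l → l < m → y m - y l ≠ 0 ∧ t * y m - y l ≠ 0) :
    ∀ k, k ≤ m → A ≤ k → ∑ l ∈ Finset.Icc k m, (y l / y b) * cc t y l b m
      = (t - 1) * y m * t ^ ((k : ℤ) - (b : ℤ)) * WW t y k b m / (t * y m - y b) := by
  intro k hk
  refine Nat.decreasingInduction
    (motive := fun l _ => A ≤ l → ∑ x ∈ Finset.Icc l m, (y x / y b) * cc t y x b m
      = (t - 1) * y m * t ^ ((l : ℤ) - (b : ℤ)) * WW t y l b m / (t * y m - y b))
    (fun k hkm ih hAk => ?_) (fun _ => ?_) hk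
  case refine_2 =>
    rw [Finset.Icc_self, Finset.sum_singleton, cc]
    rw [div_mul_div_comm, div_eq_div_iff (mul_ne_zero hb0 (mul_ne_zero hmm hmb)) hmb]
    ring
  case refine_1 =>
    have hsum : Finset.Icc k m = insert k (Finset.Icc (k + 1) m) := by
      ext l; simp only [Finset.mem_Icc, Finset.mem_insert]; omega
    rw [hsum, Finset.sum_insert (by simp only [Finset.mem_Icc]; omega), ih (by omega)]
    have hW := WW_succ_left t y k b m hkm (by omega)
    have hz : t ^ ((k : ℤ) - (b : ℤ)) = t ^ (((k : ℤ) + 1) - (b : ℤ)) * t⁻¹ := by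
      rw [← zpow_sub_one₀ ht]; ring_nf
    have h1 : y m - y k ≠ 0 := (hstep k hAk hkm).1
    have h2 : t * y m - y k ≠ 0 := (hstep k hAk hkm).2
    rw [cc, hW, ww]
    push_cast
    rw [hz]
    generalize t ^ ((k : ℤ) + 1 - (b : ℤ)) = u
    field_simp
    ring


lemma keyN (t : K) (y : ℕ → K) (a b m : ℕ) (hab : a < b) (ham : a ≤ m) (hmb : m ≤ b)
    (ht : t ≠ 0)
    (h0 : ∀ l, a ≤ l → l ≤ b → y l ≠ 0)
    (hne : ∀ k l, a ≤ k → k ≤ b → a ≤ l → l ≤ b → k ≠ l → y k - y l ≠ 0)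
    (htx : ∀ k l, a ≤ k → k ≤ b → a ≤ l → l ≤ b → t * y k - y l ≠ 0) :
    t * (1 - y a / y b) * cc t y a b m
      = (1 - t) * ((∑ k ∈ (Finset.Ico a b).filter (fun k => m ≤ k), cc t y a k m)
          - ∑ k ∈ (Finset.Ioc a b).filter (fun k => k ≤ m), (y k / y b) * cc t y k b m) := by
  obtain ⟨b', rfl⟩ : ∃ b', b = b' + 1 := ⟨b - 1, by omega⟩
  have hb0 : y (b' + 1) ≠ 0 := h0 _ (by omega) le_rfl
  by_cases hmtop : m = b' + 1
  · subst hmtop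
    have hset1 : (Finset.Ico a (b' + 1)).filter (fun k => b' + 1 ≤ k) = ∅ := by
      ext l; simp only [Finset.mem_filter, Finset.mem_Ico, Finset.notMem_empty, iff_false,
        not_and]; omega
    have hset2 : (Finset.Ioc a (b' + 1)).filter (fun k => k ≤ b' + 1) = Finset.Icc (a + 1) (b' + 1) := by
      ext l; simp only [Finset.mem_filter, Finset.mem_Ioc, Finset.mem_Icc]; omega
    rw [hset1, hset2, Finset.sum_empty]
    rw [sum_cc_right t y (b' + 1) (b' + 1) (a + 1) ht le_rfl hb0
      (htx _ _ (by omega) le_rfl (by omega) le_rfl)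
      (htx _ _ (by omega) le_rfl (by omega) le_rfl)
      (fun l hl1 hl2 => ⟨hne _ _ (by omega) le_rfl (by omega) (by omega) (by omega),
        htx _ _ (by omega) le_rfl (by omega) (by omega)⟩)
      (a + 1) (by omega) le_rfl]
    have hW := WW_succ_left t y a (b' + 1) (b' + 1) (by omega) le_rfl
    have e1 : y (b' + 1) - y a ≠ 0 := hne _ _ (by omega) le_rfl (by omega) (by omega) (by omega)
    have f1 : t * y (b' + 1) - y a ≠ 0 := htx _ _ (by omega) le_rfl (by omega) (by omega)
    have f2 : t * y (b' + 1) - y (b' + 1) ≠ 0 := htx _ _ (by omega) le_rfl (by omega) le_rfl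
    rw [cc, hW, ww]
    have hz : t ^ ((a : ℤ) - ((b' : ℤ) + 1)) = t ^ (((a : ℤ) + 1) - ((b' : ℤ) + 1)) * t⁻¹ := by
      rw [← zpow_sub_one₀ ht]; ring_nf
    push_cast
    rw [hz]
    generalize t ^ ((a : ℤ) + 1 - ((b' : ℤ) + 1)) = u
    field_simp
    first
    | ring
    | (rw [div_eq_iff (by (repeat' apply mul_ne_zero) <;> assumption)]; ring)
  · have hmb' : m ≤ b' := by omega
    have hset1 : (Finset.Ico a (b' + 1)).filter (fun k => m ≤ k) = Finset.Icc m b' := by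
      ext l; simp only [Finset.mem_filter, Finset.mem_Ico, Finset.mem_Icc]; omega
    rw [hset1, sum_cc_left t y a m b' ht ham
      (htx _ _ ham (by omega) (by omega) (by omega))
      (htx _ _ ham (by omega) ham (by omega))
      (fun l hl1 hl2 => ⟨hne _ _ ham (by omega) (by omega) (by omega) (by omega),
        htx _ _ ham (by omega) (by omega) (by omega)⟩)
      b' hmb' le_rfl]
    have e2 : y m - y (b' + 1) ≠ 0 := hne _ _ ham (by omega) (by omega) le_rfl (by omega)
    have f2 : t * y m - y (b' + 1) ≠ 0 := htx _ _ ham (by omega) (by omega) le_rfl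
    have f1 : t * y m - y a ≠ 0 := htx _ _ ham (by omega) (by omega) (by omega)
    have f3 : t * y m - y m ≠ 0 := htx _ _ ham (by omega) ham (by omega)
    have hW1 := WW_succ_right t y a b' m ham hmb'
    by_cases hma : m = a
    · subst hma
      have hset2 : (Finset.Ioc m (b' + 1)).filter (fun k => k ≤ m) = ∅ := by
        ext l; simp only [Finset.mem_filter, Finset.mem_Ioc, Finset.notMem_empty, iff_false,
          not_and]; omega
      rw [hset2, Finset.sum_empty]
      rw [cc, hW1, ww]
      have hz : t ^ ((m : ℤ) - ((b' : ℤ) + 1)) = t ^ ((m : ℤ) - (b' : ℤ)) * t⁻¹ := by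
        rw [← zpow_sub_one₀ ht]; ring_nf
      push_cast
      rw [hz]
      generalize t ^ ((m : ℤ) - (b' : ℤ)) = u
      field_simp
      first
      | ring
      | (rw [div_eq_iff (by (repeat' apply mul_ne_zero) <;> assumption)]; ring)
    · have hma' : a < m := by omega
      have hset2 : (Finset.Ioc a (b' + 1)).filter (fun k => k ≤ m) = Finset.Icc (a + 1) m := by
        ext l; simp only [Finset.mem_filter, Finset.mem_Ioc, Finset.mem_Icc]; omega
      rw [hset2, sum_cc_right t y (b' + 1) m (a + 1) ht (by omega) hb0 f2 f3
        (fun l hl1 hl2 => ⟨hne _ _ ham (by omega) (by omega) (by omega) (by omega),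
          htx _ _ ham (by omega) (by omega) (by omega)⟩)
        (a + 1) (by omega) le_rfl]
      have hW2 := WW_succ_left t y a (b' + 1) m hma' (by omega)
      have e1 : y m - y a ≠ 0 := hne _ _ ham (by omega) (by omega) (by omega) (by omega)
      -- express WW (a+1) (b'+1) m in terms of W1 := WW a b' m
      have hrel : WW t y a b' m * ww t y m (b' + 1) = ww t y m a * WW t y (a + 1) (b' + 1) m := by
        rw [← hW1, hW2]
      have hwa : ww t y m a ≠ 0 := by
        rw [ww]; exact div_ne_zero f1 e1
      have hW2' : WW t y (a + 1) (b' + 1) m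
          = WW t y a b' m * ww t y m (b' + 1) / ww t y m a := by
        rw [hrel]; field_simp
      rw [cc, hW1, hW2', ww, ww]
      have hz1 : t ^ ((a : ℤ) - ((b' : ℤ) + 1)) = t ^ ((a : ℤ) - (b' : ℤ)) * t⁻¹ := by
        rw [← zpow_sub_one₀ ht]; ring_nf
      have hz2 : ((a : ℤ) + 1 - ((b' : ℤ) + 1)) = ((a : ℤ) - (b' : ℤ)) := by ring
      push_cast
      rw [hz1, hz2]
      generalize t ^ ((a : ℤ) - (b' : ℤ)) = u
      field_simp
      first
      | ring
      | (rw [div_eq_iff (by (repeat' apply mul_ne_zero) <;> assumption)]; ring)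

end Stmt8Aux2
lemma prodQ {K : Type*} [Field K] {n : ℕ} (t : K) (x : Fin n → K)
    (hinj : Function.Injective x) (i j k : Fin n) (hk : k ∈ Finset.Icc i j) :
    (∏ p ∈ (Finset.Icc i j ×ˢ Finset.Icc i j).filter fun p => p.1 < p.2,
      ((if p.2 = k then t * x p.2 else x p.2) - (if p.1 = k then t * x p.1 else x p.1)))
    = (∏ p ∈ (Finset.Icc i j ×ˢ Finset.Icc i j).filter fun p => p.1 < p.2, (x p.2 - x p.1))
      * ∏ l ∈ (Finset.Icc i j).erase k, ((t * x k - x l) / (x k - x l)) := by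
  set s := (Finset.Icc i j ×ˢ Finset.Icc i j).filter (fun p => p.1 < p.2) with hs
  set r : Fin n × Fin n → K := fun p =>
    if p.1 = k then (t * x k - x p.2) / (x k - x p.2)
    else if p.2 = k then (t * x k - x p.1) / (x k - x p.1) else 1 with hr
  have hmem : ∀ p : Fin n × Fin n, p ∈ s ↔ p.1 ∈ Finset.Icc i j ∧ p.2 ∈ Finset.Icc i j ∧ p.1 < p.2 := by
    intro p
    simp only [hs, Finset.mem_filter, Finset.mem_product]
    tauto
  have step1 : ∀ p ∈ s, ((if p.2 = k then t * x p.2 else x p.2) -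
      (if p.1 = k then t * x p.1 else x p.1)) = (x p.2 - x p.1) * r p := by
    intro p hp
    obtain ⟨h1, h2, hlt⟩ := (hmem p).1 hp
    by_cases e1 : p.1 = k
    · have e2 : p.2 ≠ k := by intro h; rw [e1, h] at hlt; exact lt_irrefl _ hlt
      have hxne : x k - x p.2 ≠ 0 := sub_ne_zero.mpr (fun h => e2 (hinj h).symm)
      simp only [hr, e1, e2, if_true, if_false, if_pos, if_neg]
      field_simp
      ring
    · by_cases e2 : p.2 = k
      · have hxne : x k - x p.1 ≠ 0 := sub_ne_zero.mpr (fun h => e1 (hinj h).symm)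
        simp only [hr, e1, e2, if_true, if_false, if_pos, if_neg]
        field_simp
      · simp [hr, e1, e2]
  rw [Finset.prod_congr rfl step1, Finset.prod_mul_distrib]
  congr 1
  rw [← Finset.prod_filter_of_ne (p := fun p : Fin n × Fin n => p.1 = k ∨ p.2 = k)
    (by intro p hp hne; by_contra h; push_neg at h; exact hne (by simp [hr, h.1, h.2]))]
  refine Finset.prod_nbij' (fun p => if p.1 = k then p.2 else p.1)
    (fun l => if k < l then (k, l) else (l, k)) ?_ ?_ ?_ ?_ ?_
  · intro p hp
    rw [Finset.mem_filter] at hp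
    obtain ⟨hps, hor⟩ := hp
    obtain ⟨h1, h2, hlt⟩ := (hmem p).1 hps
    rcases hor with e | e
    · have e2 : p.2 ≠ k := by intro h; rw [e, h] at hlt; exact lt_irrefl _ hlt
      simp only [e, if_pos rfl]
      exact Finset.mem_erase.mpr ⟨e2, h2⟩
    · have e1 : p.1 ≠ k := by rintro h; rw [e, h] at hlt; exact lt_irrefl _ hlt
      simp only [if_neg e1]
      exact Finset.mem_erase.mpr ⟨e1, h1⟩
  · intro l hl
    obtain ⟨hlk, hlm⟩ := Finset.mem_erase.mp hl
    rcases lt_or_gt_of_ne hlk with h | h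
    · simp only [if_neg (not_lt.mpr h.le)]
      exact Finset.mem_filter.mpr ⟨(hmem _).2 ⟨hlm, hk, h⟩, Or.inr rfl⟩
    · simp only [if_pos h]
      exact Finset.mem_filter.mpr ⟨(hmem _).2 ⟨hk, hlm, h⟩, Or.inl rfl⟩
  · intro p hp
    rw [Finset.mem_filter] at hp
    obtain ⟨hps, hor⟩ := hp
    obtain ⟨h1, h2, hlt⟩ := (hmem p).1 hps
    rcases hor with e | e
    · simp only [e, if_pos rfl]
      rw [if_pos (by rw [← e]; exact hlt)]
      exact Prod.ext e.symm rfl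
    · have e1 : p.1 ≠ k := by rintro h; rw [e, h] at hlt; exact lt_irrefl _ hlt
      simp only [if_neg e1]
      rw [if_neg (by rw [← e]; exact not_lt.mpr hlt.le)]
      exact Prod.ext rfl e.symm
  · intro l hl
    obtain ⟨hlk, hlm⟩ := Finset.mem_erase.mp hl
    rcases lt_or_gt_of_ne hlk with h | h
    · simp only [if_neg (not_lt.mpr h.le)]
      rw [if_neg (by exact hlk)]
    · simp only [if_pos h, if_pos rfl]
      simp
  · intro p hp
    rw [Finset.mem_filter] at hp
    obtain ⟨hps, hor⟩ := hp
    obtain ⟨h1, h2, hlt⟩ := (hmem p).1 hps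
    rcases hor with e | e
    · simp [hr, e]
    · have e1 : p.1 ≠ k := by rintro h; rw [e, h] at hlt; exact lt_irrefl _ hlt
      simp [hr, if_neg e1, e]


open Stmt8Aux Stmt8Aux2

/-- the matrix entries
`F_{ij}(x,ξ;t) = t^{i-j}(1-t)² Σ_{i≤k≤j} ξ_k x_k x_j Δ(x_i,…,t x_k,…,x_j) /
((t x_k - x_i)(t x_k - x_j) Δ(x_i,…,x_j))`
satisfy `F_{jj} = ξ_j` and the recurrence
`F_{ij} = ((1-t)/(t(1 - x_i x_j⁻¹))) (Σ_{i≤k<j} F_{ik} − Σ_{i<k≤j} x_k x_j⁻¹ F_{kj})`. -/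
theorem stmt_8 {K : Type*} [Field K] (n : ℕ) (t : K) (x ξ : Fin n → K)
    (ht : t ≠ 0) (hx0 : ∀ i, x i ≠ 0) (hinj : Function.Injective x)
    (htx : ∀ k i, t * x k ≠ x i)
    (F : Fin n → Fin n → K)
    (hF : ∀ i j : Fin n, F i j =
      t ^ ((i : ℤ) - (j : ℤ)) * (1 - t) ^ 2 *
        ∑ k ∈ Finset.Icc i j, ξ k *
          (x k * x j *
            ∏ p ∈ (Finset.Icc i j ×ˢ Finset.Icc i j).filter fun p => p.1 < p.2,
              ((if p.2 = k then t * x p.2 else x p.2) -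
                (if p.1 = k then t * x p.1 else x p.1))) /
          ((t * x k - x i) * (t * x k - x j) *
            ∏ p ∈ (Finset.Icc i j ×ˢ Finset.Icc i j).filter fun p => p.1 < p.2,
              (x p.2 - x p.1))) :
    (∀ j, F j j = ξ j) ∧
      ∀ i j : Fin n, i < j →
        F i j = (1 - t) / (t * (1 - x i * (x j)⁻¹)) *
          ((∑ k ∈ Finset.Ico i j, F i k) -
            ∑ k ∈ Finset.Ioc i j, x k * (x j)⁻¹ * F k j) := by
  classical
  set y : ℕ → K := fun l => if h : l < n then x ⟨l, h⟩ else 1 with hy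
  have hyx : ∀ l : Fin n, y (l : ℕ) = x l := by
    intro l; simp [hy, l.isLt]
  -- F in terms of cc
  have hFeq : ∀ i j : Fin n, F i j = ∑ m ∈ Finset.Icc i j, ξ m * cc t y (i : ℕ) (j : ℕ) (m : ℕ) := by
    intro i j
    rw [hF i j, Finset.mul_sum]
    refine Finset.sum_congr rfl ?_
    intro m hm
    rw [prodQ t x hinj i j m hm]
    have hP : (∏ p ∈ (Finset.Icc i j ×ˢ Finset.Icc i j).filter fun p => p.1 < p.2,
        (x p.2 - x p.1)) ≠ 0 := by
      rw [Finset.prod_ne_zero_iff]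
      intro p hp
      rw [Finset.mem_filter] at hp
      exact sub_ne_zero.mpr fun h => (ne_of_lt hp.2) (hinj h).symm
    have hWW : WW t y (i : ℕ) (j : ℕ) (m : ℕ)
        = ∏ l ∈ (Finset.Icc i j).erase m, ((t * x m - x l) / (x m - x l)) := by
      rw [WW, show (Finset.Icc (i : ℕ) (j : ℕ)).erase (m : ℕ)
          = ((Finset.Icc i j).erase m).map Fin.valEmbedding by
        rw [Finset.map_erase, Fin.map_valEmbedding_Icc]; rfl]
      rw [Finset.prod_map]
      refine Finset.prod_congr rfl ?_
      intro l _
      simp only [Fin.valEmbedding_apply, ww, hyx]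
    rw [cc, hWW]
    rw [show (ξ m * (x m * x j * ((∏ p ∈ (Finset.Icc i j ×ˢ Finset.Icc i j).filter
          fun p => p.1 < p.2, (x p.2 - x p.1)) *
          ∏ l ∈ (Finset.Icc i j).erase m, ((t * x m - x l) / (x m - x l)))))
        = (ξ m * (x m * x j * ∏ l ∈ (Finset.Icc i j).erase m, ((t * x m - x l) / (x m - x l))))
          * (∏ p ∈ (Finset.Icc i j ×ˢ Finset.Icc i j).filter fun p => p.1 < p.2,
            (x p.2 - x p.1)) by ring]
    rw [mul_div_mul_right _ _ hP]
    simp only [hyx]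
    ring
  constructor
  · -- diagonal
    intro j
    have hD : t * x j - x j ≠ 0 := sub_ne_zero.mpr (htx j j)
    rw [hFeq j j, Finset.Icc_self, Finset.sum_singleton, cc, WW]
    rw [show ((Finset.Icc (j : ℕ) (j : ℕ)).erase (j : ℕ)) = ∅ by
      rw [Finset.Icc_self, Finset.erase_singleton]]
    rw [Finset.prod_empty, sub_self, zpow_zero, hyx]
    field_simp
    have h1 : t - 1 ≠ 0 := fun h => hD (by rw [sub_eq_zero.mp h, one_mul, sub_self])
    rw [div_eq_iff (mul_ne_zero (hx0 j) (pow_ne_zero 2 h1))]; ring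
  · intro i j hij
    have hxj : x j ≠ 0 := hx0 j
    have hij' : (i : ℕ) < (j : ℕ) := hij
    have hxine : x i ≠ x j := fun h => absurd (hinj h) (by intro h'; rw [h'] at hij; exact lt_irrefl _ hij)
    have hfrac : (1 : K) - x i * (x j)⁻¹ ≠ 0 := by
      rw [← div_eq_mul_inv]
      intro h
      apply hxine
      have := sub_eq_zero.mp h
      field_simp at this
      rw [this]
    have hden : t * (1 - x i * (x j)⁻¹) ≠ 0 := mul_ne_zero ht hfrac
    rw [div_mul_eq_mul_div, eq_div_iff hden]
    -- hypotheses for keyN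
    have h0 : ∀ l, (i : ℕ) ≤ l → l ≤ (j : ℕ) → y l ≠ 0 := by
      intro l h1 h2
      have hln : l < n := lt_of_le_of_lt h2 j.isLt
      simp only [hy, dif_pos hln]
      exact hx0 _
    have hne : ∀ k l, (i : ℕ) ≤ k → k ≤ (j : ℕ) → (i : ℕ) ≤ l → l ≤ (j : ℕ) → k ≠ l →
        y k - y l ≠ 0 := by
      intro k l _ h2 _ h4 hkl
      have hkn : k < n := lt_of_le_of_lt h2 j.isLt
      have hln : l < n := lt_of_le_of_lt h4 j.isLt
      simp only [hy, dif_pos hkn, dif_pos hln]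
      exact sub_ne_zero.mpr fun h => hkl (by simpa using congrArg Fin.val (hinj h))
    have htx' : ∀ k l, (i : ℕ) ≤ k → k ≤ (j : ℕ) → (i : ℕ) ≤ l → l ≤ (j : ℕ) →
        t * y k - y l ≠ 0 := by
      intro k l _ h2 _ h4
      have hkn : k < n := lt_of_le_of_lt h2 j.isLt
      have hln : l < n := lt_of_le_of_lt h4 j.isLt
      simp only [hy, dif_pos hkn, dif_pos hln]
      exact sub_ne_zero.mpr (htx _ _)
    -- per-m key at Fin level
    have hkey : ∀ m ∈ Finset.Icc i j,
        t * (1 - x i * (x j)⁻¹) * cc t y (i : ℕ) (j : ℕ) (m : ℕ)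
        = (1 - t) * ((∑ k ∈ (Finset.Ico i j).filter (fun k => m ≤ k),
              cc t y (i : ℕ) (k : ℕ) (m : ℕ))
            - ∑ k ∈ (Finset.Ioc i j).filter (fun k => k ≤ m),
              x k * (x j)⁻¹ * cc t y (k : ℕ) (j : ℕ) (m : ℕ)) := by
      intro m hm
      rw [Finset.mem_Icc] at hm
      have h1 := keyN t y (i : ℕ) (j : ℕ) (m : ℕ) hij' hm.1 hm.2 ht h0 hne htx'
      have hmap1 : ∑ k ∈ (Finset.Ico (i : ℕ) (j : ℕ)).filter (fun k => (m : ℕ) ≤ k),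
          cc t y (i : ℕ) k (m : ℕ)
          = ∑ k ∈ (Finset.Ico i j).filter (fun k => m ≤ k), cc t y (i : ℕ) (k : ℕ) (m : ℕ) := by
        rw [← Fin.map_valEmbedding_Ico, Finset.filter_map, Finset.sum_map]
        refine Finset.sum_congr ?_ (fun _ _ => rfl)
        congr 1
      have hmap2 : ∑ k ∈ (Finset.Ioc (i : ℕ) (j : ℕ)).filter (fun k => k ≤ (m : ℕ)),
          (y k / y (j : ℕ)) * cc t y k (j : ℕ) (m : ℕ)
          = ∑ k ∈ (Finset.Ioc i j).filter (fun k => k ≤ m),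
            x k * (x j)⁻¹ * cc t y (k : ℕ) (j : ℕ) (m : ℕ) := by
        rw [← Fin.map_valEmbedding_Ioc, Finset.filter_map, Finset.sum_map]
        refine Finset.sum_congr ?_ ?_
        · congr 1
        · intro k _
          simp only [Fin.valEmbedding_apply, hyx]
          rw [div_eq_mul_inv]
      rw [hmap1, hmap2] at h1
      rw [← h1, hyx, hyx, div_eq_mul_inv]
    -- expand both sides
    have hS1 : ∑ k ∈ Finset.Ico i j, F i k
        = ∑ m ∈ Finset.Icc i j, ξ m * ∑ k ∈ (Finset.Ico i j).filter (fun k => m ≤ k),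
            cc t y (i : ℕ) (k : ℕ) (m : ℕ) := by
      rw [Finset.sum_congr rfl (fun k _ => hFeq i k)]
      have hsub : ∀ k ∈ Finset.Ico i j, Finset.Icc i k = (Finset.Icc i j).filter (fun m => m ≤ k) := by
        intro k hk
        rw [Finset.mem_Ico] at hk
        ext l
        simp only [Finset.mem_Icc, Finset.mem_filter, Fin.le_def]
        have := hk.2
        rw [Fin.lt_def] at this
        have := hk.1
        rw [Fin.le_def] at this
        omega
      rw [Finset.sum_congr rfl (fun k hk => by rw [hsub k hk])]
      rw [Finset.sum_congr rfl (fun k _ => Finset.sum_filter _ _)]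
      rw [Finset.sum_comm]
      refine Finset.sum_congr rfl ?_
      intro m _
      rw [← Finset.sum_filter, Finset.mul_sum]
    have hS2 : ∑ k ∈ Finset.Ioc i j, x k * (x j)⁻¹ * F k j
        = ∑ m ∈ Finset.Icc i j, ξ m * ∑ k ∈ (Finset.Ioc i j).filter (fun k => k ≤ m),
            x k * (x j)⁻¹ * cc t y (k : ℕ) (j : ℕ) (m : ℕ) := by
      have hstep : ∀ k ∈ Finset.Ioc i j, x k * (x j)⁻¹ * F k j
          = ∑ m ∈ (Finset.Icc i j).filter (fun m => k ≤ m),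
              ξ m * (x k * (x j)⁻¹ * cc t y (k : ℕ) (j : ℕ) (m : ℕ)) := by
        intro k hk
        rw [Finset.mem_Ioc] at hk
        have hsub : Finset.Icc k j = (Finset.Icc i j).filter (fun m => k ≤ m) := by
          ext l
          simp only [Finset.mem_Icc, Finset.mem_filter, Fin.le_def]
          have h1 := hk.1
          rw [Fin.lt_def] at h1
          have h2 := hk.2
          rw [Fin.le_def] at h2
          omega
        rw [hFeq k j, hsub, Finset.mul_sum]
        refine Finset.sum_congr rfl ?_
        intro m _
        ring
      rw [Finset.sum_congr rfl hstep]
      rw [Finset.sum_congr rfl (fun k _ => Finset.sum_filter _ _)]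
      rw [Finset.sum_comm]
      refine Finset.sum_congr rfl ?_
      intro m _
      rw [← Finset.sum_filter, Finset.mul_sum]
    rw [hFeq i j, hS1, hS2, Finset.sum_mul, ← Finset.sum_sub_distrib, Finset.mul_sum]
    refine Finset.sum_congr rfl ?_
    intro m hm
    have := hkey m hm
    linear_combination ξ m * this
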